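/- Let R be a ring, G a group, and F a free left RG-module with basis B. If RG contains no left engulfing elements (with respect to the basis {1}), then F contains no left engulfing elements with respect to B: for every nonzero m ∈ F and every r ∈ RG with supp_B(r·m) ⊆ supp_B(m), one has r ∈ R. -/

import Mathlib

section

variable {R G B : Type*} [Ring R] [Group G]

/-- The support `supp_B(m) ⊆ G × B` of an element `m` of the free `RG`-module
`F = ⊕_{b ∈ B} RG` with basis `B`: the pair `(g, b)` lies in the support iff
`g` lies in the support of the `b`-th coordinate of `m`. -/
def suppB (m : B →₀ MonoidAlgebra R G) : Set (G × B) :=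
  {p | p.1 ∈ (m p.2).coeff.support}

end

/-- let `F` be a free left `RG`-module with basis `B` (realised as
`B →₀ RG`).  If `RG` contains no left engulfing elements (with respect to the
basis `{1}`), then `F` contains no left engulfing elements with respect to `B`:
for every nonzero `m ∈ F` and every `r ∈ RG` with `supp_B(r·m) ⊆ supp_B(m)`,
one has `r ∈ R` (i.e. `supp(r) ⊆ {1}`). -/
theorem stmt_17 (R G B : Type*) [Ring R] [Group G]
    (hRG : ∀ a : MonoidAlgebra R G, a ≠ 0 → ∀ r : MonoidAlgebra R G,
      (r * a).coeff.support ⊆ a.coeff.support → (r.coeff.support : Set G) ⊆ {1})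
    (m : B →₀ MonoidAlgebra R G) (hm : m ≠ 0)
    (r : MonoidAlgebra R G) (h : suppB (r • m) ⊆ suppB m) :
    (r.coeff.support : Set G) ⊆ {1} := by
  obtain ⟨b, hb⟩ : ∃ b, m b ≠ 0 := by
    by_contra hc
    push_neg at hc
    exact hm (Finsupp.ext hc)
  refine hRG (m b) hb r ?_
  intro g hg
  have : (g, b) ∈ suppB (r • m) := by
    simpa [suppB, Finsupp.smul_apply, smul_eq_mul] using hg
  exact h this
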